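/- Every boundary horofunction ξ on the hyperbolic plane (Poincaré disk model, base point 0) is of the form ξ(z) = −log((1−|z|²)/|z−e^{iθ}|²) · (−1), i.e. ξ(z) = log((1−|z|²)/|z−e^{iθ}|²), for some θ ∈ [0,2π]. Moreover, for x = tanh(r/2) with r > 0 and the four points a = x, b = ix, c = −x, d = −ix, one has ξ(a)+ξ(b)+ξ(c)+ξ(d) = log((1−x²)⁴/|e^{4iθ} − x⁴|²) ≤ 2·log((1−x²)/(1+x²)) < 0 for every such ξ. -/

import Mathlib

open Filter Topology Real

/-- Inverse hyperbolic cosine. -/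
noncomputable def arcosh (t : ℝ) : ℝ := Real.log (t + Real.sqrt (t ^ 2 - 1))

/-- The hyperbolic distance in the Poincaré disk model:
`cosh d(z,w) = 1 + 2|z−w|²/((1−|z|²)(1−|w|²))`. -/
noncomputable def distDisk (z w : ℂ) : ℝ :=
  _root_.arcosh (1 + 2 * ‖z - w‖ ^ 2 /
    ((1 - ‖z‖ ^ 2) * (1 - ‖w‖ ^ 2)))

/-- A boundary horofunction of the Poincaré disk, normalized at the base point `0`:
a locally (here: pointwise) uniform limit of `d(z_n, 0) − d(z_n, ·)` along a sequence
`z_n` escaping to the boundary circle. -/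
def IsBoundaryHorofunction (ξ : ℂ → ℝ) : Prop :=
  ∃ z : ℕ → ℂ, (∀ n, ‖z n‖ < 1) ∧
    Tendsto (fun n => ‖z n‖) atTop (𝓝 1) ∧
    ∀ w : ℂ, ‖w‖ < 1 →
      Tendsto (fun n => distDisk (z n) 0 - distDisk (z n) w) atTop (𝓝 (ξ w))

lemma arcosh_eq (s b A : ℝ) (hs0 : 0 ≤ s) (hs1 : s < 1) (hb : 1 - s ≤ b)
    (hA : A * (1 - s) = b) :
    _root_.arcosh A = Real.log (b + Real.sqrt (b ^ 2 - (1 - s) ^ 2)) - Real.log (1 - s) := by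
  have h1 : (0:ℝ) < 1 - s := by linarith
  have hbpos : 0 < b := lt_of_lt_of_le h1 hb
  have hA' : A = b / (1 - s) := (eq_div_iff h1.ne').mpr hA
  subst hA'
  have hnum : 0 ≤ b ^ 2 - (1 - s) ^ 2 := by nlinarith
  have h2 : (b / (1 - s)) ^ 2 - 1 = (b ^ 2 - (1 - s) ^ 2) / (1 - s) ^ 2 := by
    field_simp
  have hpos : 0 < b + Real.sqrt (b ^ 2 - (1 - s) ^ 2) := by
    have := Real.sqrt_nonneg (b ^ 2 - (1 - s) ^ 2); linarith
  rw [_root_.arcosh, h2, Real.sqrt_div hnum, Real.sqrt_sq h1.le, ← add_div,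
    Real.log_div hpos.ne' h1.ne']

lemma hAgen (s t q : ℝ) (hs : 1 - s ≠ 0) (ht : 1 - t ≠ 0) :
    (1 + 2 * q / ((1 - s) * (1 - t))) * (1 - s) = (1 - s) + 2 * q / (1 - t) := by
  field_simp

lemma limit_aux (u : ℕ → ℂ) (hu : ∀ n, ‖u n‖ < 1) (ζ : ℂ)
    (hζ : ‖ζ‖ = 1) (huζ : Tendsto u atTop (𝓝 ζ)) (w : ℂ) (hw : ‖w‖ < 1) :
    Tendsto (fun n => distDisk (u n) 0 - distDisk (u n) w) atTop
      (𝓝 (Real.log ((1 - ‖w‖ ^ 2) / ‖w - ζ‖ ^ 2))) := by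
  set t := ‖w‖ ^ 2 with htdef
  have ht0 : 0 ≤ t := by positivity
  have ht1 : t < 1 := by
    have := pow_lt_one₀ (norm_nonneg w) hw (two_ne_zero)
    exact this
  have h1t : (0:ℝ) < 1 - t := by linarith
  set s : ℕ → ℝ := fun n => ‖u n‖ ^ 2 with hsdef
  have hs0 : ∀ n, 0 ≤ s n := fun n => by positivity
  have hs1 : ∀ n, s n < 1 := fun n => pow_lt_one₀ (norm_nonneg _) (hu n) two_ne_zero
  set q : ℕ → ℝ := fun n => ‖u n - w‖ ^ 2 with hqdef
  have hq0 : ∀ n, 0 ≤ q n := fun n => by positivity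
  set b : ℕ → ℝ := fun n => (1 - s n) + 2 * q n / (1 - t) with hbdef
  set f : ℕ → ℝ := fun n => (1 + s n) + Real.sqrt ((1 + s n) ^ 2 - (1 - s n) ^ 2) with hfdef
  set g : ℕ → ℝ := fun n => b n + Real.sqrt ((b n) ^ 2 - (1 - s n) ^ 2) with hgdef
  have hkey : ∀ n, distDisk (u n) 0 - distDisk (u n) w = Real.log (f n) - Real.log (g n) := by
    intro n
    have h1s : (0:ℝ) < 1 - s n := by have := hs1 n; linarith
    have h1 : distDisk (u n) 0 = Real.log (f n) - Real.log (1 - s n) := by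
      rw [distDisk]
      exact arcosh_eq (s n) (1 + s n) _ (hs0 n) (hs1 n) (by linarith [hs0 n])
        (by simp only [sub_zero, norm_zero, hsdef]; field_simp [show (1:ℝ) - ‖u n‖ ^ 2 ≠ 0 from h1s.ne']; ring)
    have h2 : distDisk (u n) w = Real.log (g n) - Real.log (1 - s n) := by
      rw [distDisk]
      exact arcosh_eq (s n) (b n) _ (hs0 n) (hs1 n)
        (by have : 0 ≤ 2 * q n / (1 - t) := by positivity
            simp only [hbdef]; linarith)
        (hAgen (s n) t (q n) h1s.ne' h1t.ne')
    rw [h1, h2]; ring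
  -- limits
  have habs : Tendsto (fun n => ‖u n‖) atTop (𝓝 1) := by
    have := (continuous_norm.tendsto ζ).comp huζ
    rwa [hζ] at this
  have hsl : Tendsto s atTop (𝓝 1) := by
    have := habs.pow 2
    simpa using this
  have hql : Tendsto q atTop (𝓝 (‖ζ - w‖ ^ 2)) := by
    exact ((continuous_norm.tendsto _).comp (huζ.sub tendsto_const_nhds)).pow 2
  have hζw : 0 < ‖ζ - w‖ := by
    refine norm_pos_iff.mpr (sub_ne_zero.mpr ?_)
    intro h; rw [h] at hζ; rw [hζ] at hw; exact lt_irrefl 1 hw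
  set c : ℝ := 2 * ‖ζ - w‖ ^ 2 / (1 - t) with hcdef
  have hcpos : 0 < c := by positivity
  have hbl : Tendsto b atTop (𝓝 c) := by
    have h := (hsl.const_sub 1).add ((hql.const_mul 2).div_const (1 - t))
    simpa using h
  have h1sl : Tendsto (fun n => (1 : ℝ) - s n) atTop (𝓝 0) := by
    have := hsl.const_sub 1
    simpa using this
  have hgl : Tendsto g atTop (𝓝 (2 * c)) := by
    have h1 : Tendsto (fun n => (b n) ^ 2 - (1 - s n) ^ 2) atTop (𝓝 (c ^ 2)) := by
      have := (hbl.pow 2).sub (h1sl.pow 2)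
      simpa using this
    have h2 : Tendsto (fun n => Real.sqrt ((b n) ^ 2 - (1 - s n) ^ 2)) atTop (𝓝 c) := by
      have := (Real.continuous_sqrt.tendsto _).comp h1
      rwa [Real.sqrt_sq hcpos.le] at this
    have := hbl.add h2
    rwa [← two_mul] at this
  have hfl : Tendsto f atTop (𝓝 4) := by
    have h1 : Tendsto (fun n => (1 + s n) ^ 2 - (1 - s n) ^ 2) atTop (𝓝 4) := by
      have := ((hsl.const_add 1).pow 2).sub (h1sl.pow 2)
      norm_num at this
      convert this using 2 <;> norm_num
    have h2 : Tendsto (fun n => Real.sqrt ((1 + s n) ^ 2 - (1 - s n) ^ 2)) atTop (𝓝 2) := by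
      have := (Real.continuous_sqrt.tendsto _).comp h1
      have h4 : Real.sqrt 4 = 2 := by
        rw [show (4:ℝ) = 2 ^ 2 by norm_num, Real.sqrt_sq (by norm_num : (0:ℝ) ≤ 2)]
      rwa [h4] at this
    have := (hsl.const_add 1).add h2
    norm_num at this
    convert this using 2 <;> norm_num
  have hfin : Tendsto (fun n => Real.log (f n) - Real.log (g n)) atTop
      (𝓝 (Real.log 4 - Real.log (2 * c))) :=
    (hfl.log (by norm_num)).sub (hgl.log (by positivity))
  have hval : Real.log 4 - Real.log (2 * c) = Real.log ((1 - t) / ‖w - ζ‖ ^ 2) := by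
    rw [← Real.log_div (by norm_num) (by positivity)]
    congr 1
    rw [norm_sub_rev w ζ, hcdef]
    field_simp
    ring
  rw [← hval]
  exact hfin.congr (fun n => (hkey n).symm)
/-- Every boundary horofunction on the hyperbolic plane (Poincaré disk, base point `0`)
is of the form `ξ(z) = log((1−|z|²)/|z−e^{iθ}|²)` for some `θ ∈ [0,2π]`; moreover, for
`x = tanh(r/2)` with `r > 0` and the four points `a = x`, `b = ix`, `c = −x`, `d = −ix`,
`ξ(a)+ξ(b)+ξ(c)+ξ(d) = log((1−x²)⁴/|e^{4iθ} − x⁴|²) ≤ 2 log((1−x²)/(1+x²)) < 0`. -/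
theorem boundary_horofunctions_of_disk (ξ : ℂ → ℝ) (hξ : IsBoundaryHorofunction ξ) :
    ∃ θ ∈ Set.Icc (0 : ℝ) (2 * π),
      (∀ w : ℂ, ‖w‖ < 1 →
        ξ w = Real.log ((1 - ‖w‖ ^ 2) /
          ‖w - Complex.exp (θ * Complex.I)‖ ^ 2)) ∧
      ∀ r : ℝ, 0 < r →
        (fun x : ℝ =>
          ξ (x : ℂ) + ξ ((x : ℂ) * Complex.I) + ξ (-(x : ℂ)) + ξ (-(x : ℂ) * Complex.I) =
              Real.log ((1 - x ^ 2) ^ 4 /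
                ‖Complex.exp (4 * θ * Complex.I) - (x : ℂ) ^ 4‖ ^ 2) ∧
            ξ (x : ℂ) + ξ ((x : ℂ) * Complex.I) + ξ (-(x : ℂ)) + ξ (-(x : ℂ) * Complex.I) ≤
              2 * Real.log ((1 - x ^ 2) / (1 + x ^ 2)) ∧
            2 * Real.log ((1 - x ^ 2) / (1 + x ^ 2)) < 0)
          (Real.tanh (r / 2)) := by
  obtain ⟨z, hz1, hz2, hz3⟩ := hξ
  have hmem : ∀ n, z n ∈ Metric.closedBall (0 : ℂ) 1 := by
    intro n
    simpa [Metric.mem_closedBall, Complex.dist_eq] using (hz1 n).le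
  obtain ⟨ζ, hζmem, φ, hφ, hφt⟩ :=
    (isCompact_closedBall (0 : ℂ) 1).tendsto_subseq hmem
  have hζ1 : ‖ζ‖ = 1 := by
    have h1 : Tendsto (fun k => ‖z (φ k)‖) atTop (𝓝 (‖ζ‖)) :=
      (continuous_norm.tendsto ζ).comp hφt
    have h2 : Tendsto (fun k => ‖z (φ k)‖) atTop (𝓝 1) :=
      hz2.comp hφ.tendsto_atTop
    exact tendsto_nhds_unique h1 h2
  have hform : ∀ w : ℂ, ‖w‖ < 1 →
      ξ w = Real.log ((1 - ‖w‖ ^ 2) / ‖w - ζ‖ ^ 2) := by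
    intro w hw
    have h1 : Tendsto (fun k => distDisk (z (φ k)) 0 - distDisk (z (φ k)) w) atTop
        (𝓝 (ξ w)) := (hz3 w hw).comp hφ.tendsto_atTop
    have h2 := limit_aux (fun k => z (φ k)) (fun k => hz1 (φ k)) ζ hζ1 hφt w hw
    exact tendsto_nhds_unique h1 h2
  -- choice of θ
  set θ : ℝ := if 0 ≤ Complex.arg ζ then Complex.arg ζ else Complex.arg ζ + 2 * π with hθdef
  have hbase : Complex.exp (Complex.arg ζ * Complex.I) = ζ := by
    have := Complex.norm_mul_exp_arg_mul_I ζ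
    rwa [hζ1, Complex.ofReal_one, one_mul] at this
  have hθI : Complex.exp ((θ : ℂ) * Complex.I) = ζ := by
    by_cases h : 0 ≤ Complex.arg ζ
    · rw [hθdef]; simp only [h, if_true]; exact hbase
    · rw [hθdef]; simp only [h, if_false]
      push_cast
      rw [add_mul, Complex.exp_add, hbase]
      simp [Complex.exp_two_pi_mul_I]
  have hθmem : θ ∈ Set.Icc (0 : ℝ) (2 * π) := by
    have h1 := Complex.arg_le_pi ζ
    have h2 := Complex.neg_pi_lt_arg ζ
    have hπ := Real.pi_pos
    constructor
    · rw [hθdef]; split_ifs with h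
      · exact h
      · linarith
    · rw [hθdef]; split_ifs with h
      · linarith
      · linarith
  refine ⟨θ, hθmem, ?_, ?_⟩
  · intro w hw
    rw [hθI]
    exact hform w hw
  · intro r hr
    have hx0 : 0 < Real.tanh (r / 2) := by
      rw [Real.tanh_eq_sinh_div_cosh]
      have h5 : Real.exp (-(r/2)) < Real.exp (r/2) := Real.exp_lt_exp.mpr (by linarith)
      have h6 : 0 < Real.sinh (r/2) := by rw [Real.sinh_eq]; linarith
      exact div_pos h6 (Real.cosh_pos _)
    have hx1 : Real.tanh (r / 2) < 1 := by
      rw [Real.tanh_eq_sinh_div_cosh, div_lt_one (Real.cosh_pos _)]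
      have h := Real.cosh_sub_sinh (r / 2)
      have := Real.exp_pos (-(r / 2))
      linarith
    set x : ℝ := Real.tanh (r / 2) with hxdef
    set e : ℂ := Complex.exp ((θ : ℂ) * Complex.I) with hedef
    have habse : ‖e‖ = 1 := Complex.norm_exp_ofReal_mul_I θ
    have h1x2 : (0:ℝ) < 1 - x ^ 2 := by nlinarith
    have hξval : ∀ w : ℂ, ‖w‖ = x →
        ξ w = Real.log ((1 - x ^ 2) / ‖w - e‖ ^ 2) := by
      intro w hw
      rw [hform w (by rw [hw]; exact hx1), hw, show ζ = e from hθI.symm]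
    have hd : ∀ w : ℂ, ‖w‖ = x → 0 < ‖w - e‖ := by
      intro w hw
      refine norm_pos_iff.mpr (sub_ne_zero.mpr ?_)
      intro h
      rw [h, habse] at hw
      exact absurd hw.symm (ne_of_lt hx1)
    have hax : ‖(x : ℂ)‖ = x := by
      rw [Complex.norm_real, Real.norm_eq_abs, abs_of_pos hx0]
    have haxI : ‖(x : ℂ) * Complex.I‖ = x := by
      rw [norm_mul, Complex.norm_I, mul_one, hax]
    have hanx : ‖-(x : ℂ)‖ = x := by rw [norm_neg, hax]
    have hanxI : ‖-(x : ℂ) * Complex.I‖ = x := by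
      rw [norm_mul, norm_neg, Complex.norm_I, mul_one, hax]
    have hd1 := hd _ hax
    have hd2 := hd _ haxI
    have hd3 := hd _ hanx
    have hd4 := hd _ hanxI
    have hP1 : (1 - x ^ 2) / ‖(x : ℂ) - e‖ ^ 2 ≠ 0 :=
      ne_of_gt (div_pos h1x2 (by positivity))
    have hP2 : (1 - x ^ 2) / ‖(x : ℂ) * Complex.I - e‖ ^ 2 ≠ 0 :=
      ne_of_gt (div_pos h1x2 (by positivity))
    have hP3 : (1 - x ^ 2) / ‖-(x : ℂ) - e‖ ^ 2 ≠ 0 :=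
      ne_of_gt (div_pos h1x2 (by positivity))
    have hP4 : (1 - x ^ 2) / ‖-(x : ℂ) * Complex.I - e‖ ^ 2 ≠ 0 :=
      ne_of_gt (div_pos h1x2 (by positivity))
    have hprod : ((x : ℂ) - e) * ((x : ℂ) * Complex.I - e) * (-(x : ℂ) - e) *
        (-(x : ℂ) * Complex.I - e) = e ^ 4 - (x : ℂ) ^ 4 := by
      linear_combination ((x : ℂ) ^ 4 - (x : ℂ) ^ 2 * e ^ 2) * Complex.I_sq
    have hE : e ^ 4 = Complex.exp (4 * (θ : ℂ) * Complex.I) := by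
      rw [hedef, ← Complex.exp_nat_mul]
      norm_num
      ring_nf
    set K : ℝ := ‖Complex.exp (4 * (θ : ℂ) * Complex.I) - (x : ℂ) ^ 4‖ with hKdef
    have habs4 : ‖(x : ℂ) - e‖ * ‖(x : ℂ) * Complex.I - e‖ *
        ‖-(x : ℂ) - e‖ * ‖-(x : ℂ) * Complex.I - e‖ = K := by
      rw [← norm_mul, ← norm_mul, ← norm_mul, hprod, hE]
    have hsum : ξ (x : ℂ) + ξ ((x : ℂ) * Complex.I) + ξ (-(x : ℂ)) + ξ (-(x : ℂ) * Complex.I) =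
        Real.log ((1 - x ^ 2) ^ 4 / K ^ 2) := by
      rw [hξval _ hax, hξval _ haxI, hξval _ hanx, hξval _ hanxI,
        ← Real.log_mul hP1 hP2, ← Real.log_mul (mul_ne_zero hP1 hP2) hP3,
        ← Real.log_mul (mul_ne_zero (mul_ne_zero hP1 hP2) hP3) hP4]
      congr 1
      rw [← habs4]
      field_simp
    have hx4 : (0:ℝ) < 1 - x ^ 4 := by nlinarith
    have hK : 1 - x ^ 4 ≤ K := by
      have h1 : ‖Complex.exp (4 * (θ : ℂ) * Complex.I)‖ = 1 := by
        have h2 : (4 * (θ : ℂ) * Complex.I) = ((4 * θ : ℝ) : ℂ) * Complex.I := by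
          push_cast; ring
        rw [h2, Complex.norm_exp_ofReal_mul_I]
      have h3 : ‖(x : ℂ) ^ 4‖ = x ^ 4 := by
        rw [norm_pow, hax]
      calc 1 - x ^ 4 = ‖Complex.exp (4 * (θ : ℂ) * Complex.I)‖ -
            ‖(x : ℂ) ^ 4‖ := by rw [h1, h3]
        _ ≤ K := by
            have h5 := norm_sub_norm_le (Complex.exp (4 * (θ : ℂ) * Complex.I)) ((x : ℂ) ^ 4)
            rw [hKdef]
            linarith
    have hKpos : 0 < K := lt_of_lt_of_le hx4 hK
    have hineq : ξ (x : ℂ) + ξ ((x : ℂ) * Complex.I) + ξ (-(x : ℂ)) + ξ (-(x : ℂ) * Complex.I) ≤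
        2 * Real.log ((1 - x ^ 2) / (1 + x ^ 2)) := by
      rw [hsum, show (2:ℝ) * Real.log ((1 - x ^ 2) / (1 + x ^ 2)) =
        Real.log (((1 - x ^ 2) / (1 + x ^ 2)) ^ 2) by rw [Real.log_pow]; push_cast; ring]
      apply Real.log_le_log (by positivity)
      rw [div_pow, div_le_div_iff₀ (by positivity) (by positivity)]
      have hK2 : (1 - x ^ 4) ^ 2 ≤ K ^ 2 := pow_le_pow_left₀ hx4.le hK 2
      calc (1 - x ^ 2) ^ 4 * (1 + x ^ 2) ^ 2 = (1 - x ^ 2) ^ 2 * (1 - x ^ 4) ^ 2 := by ring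
        _ ≤ (1 - x ^ 2) ^ 2 * K ^ 2 := mul_le_mul_of_nonneg_left hK2 (sq_nonneg (1 - x ^ 2))
    have hneg : 2 * Real.log ((1 - x ^ 2) / (1 + x ^ 2)) < 0 := by
      have hq1 : (0:ℝ) < (1 - x ^ 2) / (1 + x ^ 2) := div_pos h1x2 (by positivity)
      have hq2 : (1 - x ^ 2) / (1 + x ^ 2) < 1 := by
        rw [div_lt_one (by positivity)]
        nlinarith
      have := Real.log_neg hq1 hq2
      linarith
    exact ⟨hsum, hineq, hneg⟩
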